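/- arXiv:1312.6353 — 5 statements merged into one kernel-verified Lean document; each statement's English description precedes it below -/
import Mathlib

section
/- Let ε > 0 and let I ⊆ ℝ be an interval. Let a : I → ℝ, c₁ : I → ℝ^{1×2}, c₂ : I → ℝ^{2×1}, B : I → ℝ^{2×2} be continuous, and define the 3×3 matrix 𝒜(s) with block form 𝒜(s) = [[a(s), c₁(s)], [ε c₂(s), ε B(s)]]. Suppose p₁ : I → ℝ^{1×2} and p₂ : I → ℝ^{2×1} are differentiable and satisfy on I the Riccati equations ε p₁' = c₁ + a p₁ − ε p₁ B − ε p₁ c₂ p₁ and ε p₂' = c₂ − a p₂ + ε B p₂ − ε p₂ c₁ p₂, and that the matrix S(s) = [[1, p₁(s)], [ε p₂(s), I₂]] is invertible for every s ∈ I. Set d₁(s) = a(s) + ε c₁(s) p₂(s) and D₂(s) = B(s) + c₂(s) p₁(s). Let V(s,r) denote the principal solution of η' = D₂(s) η (i.e. ∂ₛ V(s,r) = D₂(s) V(s,r), V(r,r) = I₂), and let U(s,r) denote the principal solution of ε ζ' = 𝒜(s) ζ (i.e. ε ∂ₛ U(s,r) = 𝒜(s) U(s,r), U(r,r) = I₃).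 Then for all r, s ∈ I, U(s,r) = S(s) · diag( exp((1/ε)∫_r^s d₁(u) du), V(s,r) ) · S(r)⁻¹. -/
open Matrix Set Filter
open scoped Topology

attribute [local instance] Matrix.normedAddCommGroup Matrix.normedSpace

lemma matrix_hasDerivWithinAt_iff {m n : Type*} [Fintype m] [Fintype n]
    {f : ℝ → Matrix m n ℝ} {f' : Matrix m n ℝ} {s : Set ℝ} {x : ℝ} :
    HasDerivWithinAt f f' s x ↔ ∀ i j, HasDerivWithinAt (fun t => f t i j) (f' i j) s x := by
  refine (hasDerivWithinAt_pi (φ := fun t => (f t : m → n → ℝ)) (φ' := (f' : m → n → ℝ))).trans ?_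
  exact forall_congr' fun i => hasDerivWithinAt_pi

lemma continuousOn_matrix_iff {m n : Type*} [Fintype m] [Fintype n]
    {f : ℝ → Matrix m n ℝ} {s : Set ℝ} :
    ContinuousOn f s ↔ ∀ i j, ContinuousOn (fun t => f t i j) s := by
  refine (continuousOn_pi (f := fun t => (f t : m → n → ℝ))).trans ?_
  exact forall_congr' fun i => continuousOn_pi

lemma matrix_hasDerivWithinAt_mul {m n p : Type*} [Fintype m] [Fintype n] [Fintype p]
    {A : ℝ → Matrix m n ℝ} {B : ℝ → Matrix n p ℝ} {A' : Matrix m n ℝ} {B' : Matrix n p ℝ}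
    {s : Set ℝ} {x : ℝ} (hA : HasDerivWithinAt A A' s x) (hB : HasDerivWithinAt B B' s x) :
    HasDerivWithinAt (fun t => A t * B t) (A' * B x + A x * B') s x := by
  rw [matrix_hasDerivWithinAt_iff] at hA hB ⊢
  intro i j
  simp only [Matrix.mul_apply, Matrix.add_apply, ← Finset.sum_add_distrib]
  exact HasDerivWithinAt.fun_sum fun k _ => (hA i k).mul (hB k j)

lemma matrix_hasDerivWithinAt_fromBlocks {n₁ n₂ m₁ m₂ : Type*}
    [Fintype n₁] [Fintype n₂] [Fintype m₁] [Fintype m₂]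
    {A : ℝ → Matrix n₁ m₁ ℝ} {B : ℝ → Matrix n₁ m₂ ℝ} {C : ℝ → Matrix n₂ m₁ ℝ}
    {D : ℝ → Matrix n₂ m₂ ℝ} {A' B' C' D'} {s : Set ℝ} {x : ℝ}
    (hA : HasDerivWithinAt A A' s x) (hB : HasDerivWithinAt B B' s x)
    (hC : HasDerivWithinAt C C' s x) (hD : HasDerivWithinAt D D' s x) :
    HasDerivWithinAt (fun t => Matrix.fromBlocks (A t) (B t) (C t) (D t))
      (Matrix.fromBlocks A' B' C' D') s x := by
  rw [matrix_hasDerivWithinAt_iff] at hA hB hC hD ⊢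
  rintro (i | i) (j | j) <;>
    simpa using (by first | exact hA i j | exact hB i j | exact hC i j | exact hD i j)

lemma matrix_continuousOn_fromBlocks {n₁ n₂ m₁ m₂ : Type*}
    [Fintype n₁] [Fintype n₂] [Fintype m₁] [Fintype m₂]
    {A : ℝ → Matrix n₁ m₁ ℝ} {B : ℝ → Matrix n₁ m₂ ℝ} {C : ℝ → Matrix n₂ m₁ ℝ}
    {D : ℝ → Matrix n₂ m₂ ℝ} {s : Set ℝ}
    (hA : ContinuousOn A s) (hB : ContinuousOn B s)
    (hC : ContinuousOn C s) (hD : ContinuousOn D s) :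
    ContinuousOn (fun t => Matrix.fromBlocks (A t) (B t) (C t) (D t)) s := by
  rw [continuousOn_matrix_iff]
  rintro (i | i) (j | j) <;>
    simpa using (by first
      | exact continuousOn_matrix_iff.mp hA i j | exact continuousOn_matrix_iff.mp hB i j
      | exact continuousOn_matrix_iff.mp hC i j | exact continuousOn_matrix_iff.mp hD i j)

lemma matrix_norm_mul_le {m n p : Type*} [Fintype m] [Fintype n] [Fintype p]
    (A : Matrix m n ℝ) (B : Matrix n p ℝ) :
    ‖A * B‖ ≤ (Fintype.card n : ℝ) * ‖A‖ * ‖B‖ := by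
  have hnn : 0 ≤ (Fintype.card n : ℝ) * ‖A‖ * ‖B‖ := by positivity
  rw [Matrix.norm_def, pi_norm_le_iff_of_nonneg hnn]
  intro i
  rw [pi_norm_le_iff_of_nonneg hnn]
  intro j
  calc ‖(A * B) i j‖ = ‖∑ k, A i k * B k j‖ := by rw [Matrix.mul_apply]
    _ ≤ ∑ k, ‖A i k * B k j‖ := norm_sum_le _ _
    _ ≤ ∑ _k : n, ‖A‖ * ‖B‖ := Finset.sum_le_sum fun k _ => by
        rw [norm_mul]
        exact mul_le_mul (norm_entry_le_entrywise_sup_norm A)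
          (norm_entry_le_entrywise_sup_norm B) (norm_nonneg _) (norm_nonneg _)
    _ = (Fintype.card n : ℝ) * ‖A‖ * ‖B‖ := by
        rw [Finset.sum_const, Finset.card_univ, nsmul_eq_mul, mul_assoc]

lemma one_by_one_eq (M : Matrix (Fin 1) (Fin 1) ℝ) : M = M 0 0 • 1 := by
  ext i j
  fin_cases i; fin_cases j; simp

lemma key_identity (ε : ℝ) (a : ℝ)
    (c₁ p₁ p₁' : Matrix (Fin 1) (Fin 2) ℝ) (c₂ p₂ p₂' : Matrix (Fin 2) (Fin 1) ℝ)
    (B : Matrix (Fin 2) (Fin 2) ℝ)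
    (h1 : ε • p₁' = c₁ + a • p₁ - ε • (p₁ * B) - ε • (p₁ * c₂ * p₁))
    (h2 : ε • p₂' = c₂ - a • p₂ + ε • (B * p₂) - ε • (p₂ * c₁ * p₂)) :
    Matrix.fromBlocks (a • 1) c₁ (ε • c₂) (ε • B) * Matrix.fromBlocks 1 p₁ (ε • p₂) 1
      = ε • Matrix.fromBlocks 0 p₁' (ε • p₂') 0 +
        Matrix.fromBlocks 1 p₁ (ε • p₂) 1 *
          Matrix.fromBlocks ((a + ε * (c₁ * p₂) 0 0) • 1) 0 0 (ε • (B + c₂ * p₁)) := by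
  have hp2c1p2 : p₂ * c₁ * p₂ = (c₁ * p₂) 0 0 • p₂ := by
    conv_lhs => rw [Matrix.mul_assoc, one_by_one_eq (c₁ * p₂)]
    rw [Matrix.mul_smul, Matrix.mul_one]
  rw [Matrix.fromBlocks_multiply, Matrix.fromBlocks_multiply, Matrix.fromBlocks_smul]
  simp only [Matrix.fromBlocks_add]
  rw [Matrix.fromBlocks_inj]
  refine ⟨?_, ?_, ?_, ?_⟩ <;>
    simp only [Matrix.smul_mul, Matrix.mul_smul, Matrix.mul_one, Matrix.one_mul,
      Matrix.mul_zero, Matrix.zero_mul, smul_zero, add_zero, zero_add, Matrix.mul_add,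
      ← Matrix.mul_assoc, smul_add]
  · conv_lhs => rw [one_by_one_eq (c₁ * p₂)]
    rw [add_smul, ← smul_smul]
  · rw [h1]; abel
  · rw [h2, hp2c1p2]; match_scalars <;> ring
  · abel


/-- Block-diagonalization of the principal solution of the slow-fast
linear system `ε ζ' = 𝒜(s) ζ` by means of solutions `p₁, p₂` of the associated
Riccati equations: `U(s,r) = S(s) · diag(e^{(1/ε)∫_r^s d₁}, V(s,r)) · S(r)⁻¹`. -/
theorem principal_solution_block_diagonalization (ε : ℝ) (hε : 0 < ε)
    (I : Set ℝ) (hI : I.OrdConnected)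
    (a : ℝ → ℝ) (c₁ : ℝ → Matrix (Fin 1) (Fin 2) ℝ) (c₂ : ℝ → Matrix (Fin 2) (Fin 1) ℝ)
    (B : ℝ → Matrix (Fin 2) (Fin 2) ℝ)
    (ha : ContinuousOn a I) (hc₁ : ContinuousOn c₁ I) (hc₂ : ContinuousOn c₂ I)
    (hB : ContinuousOn B I)
    (𝒜 : ℝ → Matrix (Fin 1 ⊕ Fin 2) (Fin 1 ⊕ Fin 2) ℝ)
    (h𝒜 : ∀ s, 𝒜 s = Matrix.fromBlocks (a s • 1) (c₁ s) (ε • c₂ s) (ε • B s))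
    (p₁ p₁' : ℝ → Matrix (Fin 1) (Fin 2) ℝ) (p₂ p₂' : ℝ → Matrix (Fin 2) (Fin 1) ℝ)
    (hp₁ : ∀ s ∈ I, HasDerivWithinAt p₁ (p₁' s) I s)
    (hp₂ : ∀ s ∈ I, HasDerivWithinAt p₂ (p₂' s) I s)
    (hp₁eq : ∀ s ∈ I,
      ε • p₁' s = c₁ s + a s • p₁ s - ε • (p₁ s * B s) - ε • (p₁ s * c₂ s * p₁ s))
    (hp₂eq : ∀ s ∈ I,
      ε • p₂' s = c₂ s - a s • p₂ s + ε • (B s * p₂ s) - ε • (p₂ s * c₁ s * p₂ s))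
    (S : ℝ → Matrix (Fin 1 ⊕ Fin 2) (Fin 1 ⊕ Fin 2) ℝ)
    (hS : ∀ s, S s = Matrix.fromBlocks 1 (p₁ s) (ε • p₂ s) 1)
    (hSinv : ∀ s ∈ I, IsUnit (S s))
    (d₁ : ℝ → ℝ) (hd₁ : ∀ s, d₁ s = a s + ε * (c₁ s * p₂ s) 0 0)
    (D₂ : ℝ → Matrix (Fin 2) (Fin 2) ℝ) (hD₂ : ∀ s, D₂ s = B s + c₂ s * p₁ s)
    -- `V (· , r)` is the principal solution of `η' = D₂(s) η` with `V r r = 1`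
    (V : ℝ → ℝ → Matrix (Fin 2) (Fin 2) ℝ)
    (hV : ∀ r ∈ I, ∀ s ∈ I, HasDerivWithinAt (fun s => V s r) (D₂ s * V s r) I s)
    (hV0 : ∀ r ∈ I, V r r = 1)
    -- `U (· , r)` is the principal solution of `ε ζ' = 𝒜(s) ζ` with `U r r = 1`
    (U U' : ℝ → ℝ → Matrix (Fin 1 ⊕ Fin 2) (Fin 1 ⊕ Fin 2) ℝ)
    (hU : ∀ r ∈ I, ∀ s ∈ I, HasDerivWithinAt (fun s => U s r) (U' s r) I s)
    (hUeq : ∀ r ∈ I, ∀ s ∈ I, ε • U' s r = 𝒜 s * U s r)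
    (hU0 : ∀ r ∈ I, U r r = 1) :
    ∀ r ∈ I, ∀ s ∈ I,
      U s r = S s *
        Matrix.fromBlocks (Real.exp ((1 / ε) * ∫ u in r..s, d₁ u) • 1) 0 0 (V s r) *
        (S r)⁻¹ := by
  intro r hr s hs
  classical
  -- basic continuity facts
  have hp₁c : ContinuousOn p₁ I := fun t ht => (hp₁ t ht).continuousWithinAt
  have hp₂c : ContinuousOn p₂ I := fun t ht => (hp₂ t ht).continuousWithinAt
  have hd₁c : ContinuousOn d₁ I := by
    have h1 : ContinuousOn (fun t => (c₁ t * p₂ t) 0 0) I := by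
      simp only [Matrix.mul_apply]
      exact continuousOn_finset_sum _ fun k _ =>
        (continuousOn_matrix_iff.mp hc₁ 0 k).mul (continuousOn_matrix_iff.mp hp₂c k 0)
    rw [show d₁ = fun t => a t + ε * (c₁ t * p₂ t) 0 0 from funext hd₁]
    exact ha.add (continuousOn_const.mul h1)
  have h𝒜c : ContinuousOn 𝒜 I := by
    rw [show 𝒜 = fun t => Matrix.fromBlocks (a t • 1) (c₁ t) (ε • c₂ t) (ε • B t) from
      funext h𝒜]
    exact matrix_continuousOn_fromBlocks (ha.smul continuousOn_const) hc₁
      (hc₂.const_smul ε) (hB.const_smul ε)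
  have hScont : ContinuousOn S I := by
    rw [show S = fun t => Matrix.fromBlocks 1 (p₁ t) (ε • p₂ t) 1 from funext hS]
    exact matrix_continuousOn_fromBlocks continuousOn_const hp₁c (hp₂c.const_smul ε)
      continuousOn_const
  have hVc : ContinuousOn (fun t => V t r) I := fun t ht => (hV r hr t ht).continuousWithinAt
  have hUc : ContinuousOn (fun t => U t r) I := fun t ht => (hU r hr t ht).continuousWithinAt
  have hUd : ∀ t ∈ I, HasDerivWithinAt (fun q => U q r) (ε⁻¹ • (𝒜 t * U t r)) I t := by
    intro t ht
    have h2 := hUeq r hr t ht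
    rw [show ε⁻¹ • (𝒜 t * U t r) = U' t r by
      rw [← h2, smul_smul, inv_mul_cancel₀ hε.ne', one_smul]]
    exact hU r hr t ht
  -- the candidate solution
  set F : ℝ → ℝ := fun t => ∫ u in r..t, d₁ u with hFdef
  set e : ℝ → ℝ := fun t => Real.exp ((1 / ε) * F t) with hedef
  set Dm : ℝ → Matrix (Fin 1 ⊕ Fin 2) (Fin 1 ⊕ Fin 2) ℝ :=
    fun t => Matrix.fromBlocks (e t • 1) 0 0 (V t r) with hDmdef
  set g : ℝ → Matrix (Fin 1 ⊕ Fin 2) (Fin 1 ⊕ Fin 2) ℝ :=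
    fun t => S t * Dm t * (S r)⁻¹ with hgdef
  -- master derivative computation for g
  have hDg : ∀ x ∈ I, ∀ σ : Set ℝ,
      HasDerivWithinAt F (d₁ x) σ x →
      HasDerivWithinAt (fun t => V t r) (D₂ x * V x r) σ x →
      HasDerivWithinAt p₁ (p₁' x) σ x →
      HasDerivWithinAt p₂ (p₂' x) σ x →
      HasDerivWithinAt g (ε⁻¹ • (𝒜 x * g x)) σ x := by
    intro x hx σ hFd hVd hp1d hp2d
    have heD : HasDerivWithinAt e (e x * ((1 / ε) * d₁ x)) σ x := by
      rw [hedef]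
      exact (hFd.const_mul (1 / ε)).exp
    have hDmd : HasDerivWithinAt Dm
        (Matrix.fromBlocks ((e x * ((1 / ε) * d₁ x)) • 1) 0 0 (D₂ x * V x r)) σ x := by
      rw [hDmdef]
      exact matrix_hasDerivWithinAt_fromBlocks (heD.smul_const 1)
        (hasDerivWithinAt_const _ _ _) (hasDerivWithinAt_const _ _ _) hVd
    have hSd : HasDerivWithinAt S (Matrix.fromBlocks 0 (p₁' x) (ε • p₂' x) 0) σ x := by
      rw [show S = fun t => Matrix.fromBlocks 1 (p₁ t) (ε • p₂ t) 1 from funext hS]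
      exact matrix_hasDerivWithinAt_fromBlocks (hasDerivWithinAt_const _ _ _) hp1d
        (hp2d.const_smul ε) (hasDerivWithinAt_const _ _ _)
    have hgd := matrix_hasDerivWithinAt_mul (matrix_hasDerivWithinAt_mul hSd hDmd)
      (hasDerivWithinAt_const x σ ((S r)⁻¹))
    have hgd' : HasDerivWithinAt g
        ((Matrix.fromBlocks 0 (p₁' x) (ε • p₂' x) 0 * Dm x +
          S x * Matrix.fromBlocks ((e x * ((1 / ε) * d₁ x)) • 1) 0 0 (D₂ x * V x r)) *
          (S r)⁻¹ + S x * Dm x * 0) σ x := by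
      rw [hgdef]
      exact hgd
    convert hgd' using 1
    have KEY : 𝒜 x * S x = ε • (Matrix.fromBlocks 0 (p₁' x) (ε • p₂' x) 0) +
        S x * Matrix.fromBlocks (d₁ x • 1) 0 0 (ε • D₂ x) := by
      rw [h𝒜 x, hS x, hd₁ x, hD₂ x]
      exact key_identity ε (a x) (c₁ x) (p₁ x) (p₁' x) (c₂ x) (p₂ x) (p₂' x) (B x)
        (hp₁eq x hx) (hp₂eq x hx)
    have hND : Matrix.fromBlocks (d₁ x • 1) 0 0 (ε • D₂ x) * Dm x
        = ε • Matrix.fromBlocks ((e x * ((1 / ε) * d₁ x)) • 1) 0 0 (D₂ x * V x r) := by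
      rw [hDmdef]
      simp only [Matrix.fromBlocks_multiply, Matrix.fromBlocks_smul, Matrix.smul_mul,
        Matrix.mul_smul, Matrix.mul_zero, Matrix.zero_mul, Matrix.mul_one, Matrix.one_mul,
        smul_zero, add_zero, zero_add, smul_smul]
      rw [show ε * (e x * (1 / ε * d₁ x)) = e x * d₁ x by field_simp]
    rw [Matrix.mul_zero, add_zero, hgdef]
    simp only []
    rw [← Matrix.mul_assoc, ← Matrix.mul_assoc, KEY, Matrix.add_mul, Matrix.add_mul,
      Matrix.mul_assoc (S x), hND, Matrix.mul_smul, Matrix.smul_mul, Matrix.smul_mul,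
      Matrix.smul_mul, ← smul_add, smul_smul, inv_mul_cancel₀ hε.ne', one_smul,
      Matrix.add_mul]
  -- initial value
  have hg0 : g r = 1 := by
    rw [hgdef, hDmdef, hedef, hFdef]
    simp only []
    rw [intervalIntegral.integral_same, mul_zero, Real.exp_zero, one_smul, hV0 r hr,
      Matrix.fromBlocks_one, Matrix.mul_one,
      Matrix.mul_nonsing_inv _ ((Matrix.isUnit_iff_isUnit_det _).mp (hSinv r hr))]
  have hsub : uIcc r s ⊆ I := hI.uIcc_subset hr hs
  have hFc : ContinuousOn F (uIcc r s) :=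
    intervalIntegral.continuousOn_primitive_interval'
      ((hd₁c.mono hsub).intervalIntegrable) left_mem_uIcc
  have hgc : ContinuousOn g (uIcc r s) := by
    rw [hgdef, hDmdef, hedef]
    exact ((hScont.mono hsub).mul (matrix_continuousOn_fromBlocks
      ((Real.continuous_exp.comp_continuousOn (continuousOn_const.mul hFc)).smul
        continuousOn_const) continuousOn_const continuousOn_const
      (hVc.mono hsub))).mul continuousOn_const
  -- the vector field and its Lipschitz property
  set v : ℝ → Matrix (Fin 1 ⊕ Fin 2) (Fin 1 ⊕ Fin 2) ℝ →
      Matrix (Fin 1 ⊕ Fin 2) (Fin 1 ⊕ Fin 2) ℝ :=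
    fun t m => if t ∈ uIcc r s then ε⁻¹ • (𝒜 t * m) else 0 with hvdef
  obtain ⟨C, hC⟩ := (isCompact_uIcc).exists_bound_of_continuousOn (h𝒜c.mono hsub)
  have hLip : ∀ t, LipschitzOnWith (Real.toNNReal (ε⁻¹ * (3 * max C 0))) (v t)
      (univ : Set (Matrix (Fin 1 ⊕ Fin 2) (Fin 1 ⊕ Fin 2) ℝ)) := by
    intro t
    rw [hvdef]
    simp only []
    split_ifs with htm
    · refine (LipschitzWith.of_dist_le_mul fun x y => ?_).lipschitzOnWith
      rw [dist_eq_norm, dist_eq_norm, ← smul_sub, ← Matrix.mul_sub, norm_smul,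
        Real.norm_eq_abs, abs_of_pos (inv_pos.mpr hε),
        Real.coe_toNNReal _ (by positivity)]
      calc ε⁻¹ * ‖𝒜 t * (x - y)‖
          ≤ ε⁻¹ * ((Fintype.card (Fin 1 ⊕ Fin 2) : ℝ) * ‖𝒜 t‖ * ‖x - y‖) := by
            exact mul_le_mul_of_nonneg_left (matrix_norm_mul_le _ _)
              (le_of_lt (inv_pos.mpr hε))
        _ ≤ ε⁻¹ * (3 * max C 0) * ‖x - y‖ := by
            rw [mul_assoc (ε⁻¹)]
            apply mul_le_mul_of_nonneg_left _ (le_of_lt (inv_pos.mpr hε))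
            apply mul_le_mul_of_nonneg_right _ (norm_nonneg _)
            have h3 : ((Fintype.card (Fin 1 ⊕ Fin 2) : ℕ) : ℝ) = 3 := by
              simp [Fintype.card_sum, Fintype.card_fin]
            rw [h3]
            have : ‖𝒜 t‖ ≤ max C 0 := le_trans (hC t htm) (le_max_left _ _)
            linarith
    · exact (LipschitzWith.const' 0).weaken zero_le |>.lipschitzOnWith
  rcases le_total r s with hrs | hrs
  · -- case r ≤ s : forward uniqueness on Icc r s
    have huIcc : uIcc r s = Icc r s := uIcc_of_le hrs
    have hIccsub : Icc r s ⊆ I := huIcc ▸ hsub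
    have hf' : ∀ t ∈ Ico r s, HasDerivWithinAt (fun q => U q r) (v t (U t r)) (Ici t) t := by
      intro t ht
      have htI : t ∈ I := hIccsub (Ico_subset_Icc_self ht)
      have hmemIci : I ∈ 𝓝[Ici t] t :=
        mem_of_superset (Icc_mem_nhdsGE_of_mem ⟨le_rfl, ht.2⟩) (hI.out htI hs)
      have hvt : v t (U t r) = ε⁻¹ • (𝒜 t * U t r) := by
        rw [hvdef]
        simp only []
        rw [if_pos (huIcc ▸ (Ico_subset_Icc_self ht) : t ∈ uIcc r s)]
      rw [hvt]
      exact (hUd t htI).mono_of_mem_nhdsWithin hmemIci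
    have hg' : ∀ t ∈ Ico r s, HasDerivWithinAt g (v t (g t)) (Ici t) t := by
      intro t ht
      have htI : t ∈ I := hIccsub (Ico_subset_Icc_self ht)
      have hIccts : Icc t s ⊆ I := hI.out htI hs
      have hmemIci : I ∈ 𝓝[Ici t] t :=
        mem_of_superset (Icc_mem_nhdsGE_of_mem ⟨le_rfl, ht.2⟩) hIccts
      have hmemIoi : I ∈ 𝓝[Ioi t] t :=
        mem_of_superset (Icc_mem_nhdsGT_of_mem ⟨le_rfl, ht.2⟩) hIccts
      have hint : IntervalIntegrable d₁ MeasureTheory.volume r t :=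
        (hd₁c.mono (hI.uIcc_subset hr htI)).intervalIntegrable
      have hmeas : StronglyMeasurableAtFilter d₁ (𝓝[>] t) MeasureTheory.volume :=
        ⟨Icc t s, Icc_mem_nhdsGT_of_mem ⟨le_rfl, ht.2⟩,
          ((hd₁c.mono hIccts).aestronglyMeasurable measurableSet_Icc)⟩
      have hcw : ContinuousWithinAt d₁ (Ioi t) t := (hd₁c t htI).mono_of_mem_nhdsWithin hmemIoi
      have hFd : HasDerivWithinAt F (d₁ t) (Ici t) t := by
        rw [hFdef]
        exact intervalIntegral.integral_hasDerivWithinAt_right hint hmeas hcw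
      have hvt : v t (g t) = ε⁻¹ • (𝒜 t * g t) := by
        rw [hvdef]
        simp only []
        rw [if_pos (huIcc ▸ (Ico_subset_Icc_self ht) : t ∈ uIcc r s)]
      rw [hvt]
      exact hDg t htI (Ici t) hFd ((hV r hr t htI).mono_of_mem_nhdsWithin hmemIci)
        ((hp₁ t htI).mono_of_mem_nhdsWithin hmemIci) ((hp₂ t htI).mono_of_mem_nhdsWithin hmemIci)
    have heqOn := ODE_solution_unique_of_mem_Icc_right (fun t _ => hLip t)
      (hUc.mono hIccsub) hf' (fun _ _ => mem_univ _)
      (hgc.mono huIcc.symm.subset) hg' (fun _ _ => mem_univ _)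
      (by rw [hU0 r hr, hg0])
    have heq := heqOn (right_mem_Icc.mpr hrs)
    simp only [hgdef, hDmdef, hedef, hFdef] at heq
    exact heq
  · -- case s ≤ r : backward uniqueness on Icc s r
    have huIcc : uIcc r s = Icc s r := uIcc_of_ge hrs
    have hIccsub : Icc s r ⊆ I := huIcc ▸ hsub
    have hf' : ∀ t ∈ Ioc s r, HasDerivWithinAt (fun q => U q r) (v t (U t r)) (Iic t) t := by
      intro t ht
      have htI : t ∈ I := hIccsub (Ioc_subset_Icc_self ht)
      have hmemIic : I ∈ 𝓝[Iic t] t :=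
        mem_of_superset (Icc_mem_nhdsLE_of_mem ⟨ht.1, le_rfl⟩) (hI.out hs htI)
      have hvt : v t (U t r) = ε⁻¹ • (𝒜 t * U t r) := by
        rw [hvdef]
        simp only []
        rw [if_pos (huIcc ▸ (Ioc_subset_Icc_self ht) : t ∈ uIcc r s)]
      rw [hvt]
      exact (hUd t htI).mono_of_mem_nhdsWithin hmemIic
    have hg' : ∀ t ∈ Ioc s r, HasDerivWithinAt g (v t (g t)) (Iic t) t := by
      intro t ht
      have htI : t ∈ I := hIccsub (Ioc_subset_Icc_self ht)
      have hIccst : Icc s t ⊆ I := hI.out hs htI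
      have hmemIic : I ∈ 𝓝[Iic t] t :=
        mem_of_superset (Icc_mem_nhdsLE_of_mem ⟨ht.1, le_rfl⟩) hIccst
      have hint : IntervalIntegrable d₁ MeasureTheory.volume r t :=
        (hd₁c.mono (hI.uIcc_subset hr htI)).intervalIntegrable
      have hmeas : StronglyMeasurableAtFilter d₁ (𝓝[≤] t) MeasureTheory.volume :=
        ⟨Icc s t, Icc_mem_nhdsLE_of_mem ⟨ht.1, le_rfl⟩,
          ((hd₁c.mono hIccst).aestronglyMeasurable measurableSet_Icc)⟩
      have hcw : ContinuousWithinAt d₁ (Iic t) t := (hd₁c t htI).mono_of_mem_nhdsWithin hmemIic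
      have hFd : HasDerivWithinAt F (d₁ t) (Iic t) t := by
        rw [hFdef]
        exact intervalIntegral.integral_hasDerivWithinAt_right hint hmeas hcw
      have hvt : v t (g t) = ε⁻¹ • (𝒜 t * g t) := by
        rw [hvdef]
        simp only []
        rw [if_pos (huIcc ▸ (Ioc_subset_Icc_self ht) : t ∈ uIcc r s)]
      rw [hvt]
      exact hDg t htI (Iic t) hFd ((hV r hr t htI).mono_of_mem_nhdsWithin hmemIic)
        ((hp₁ t htI).mono_of_mem_nhdsWithin hmemIic) ((hp₂ t htI).mono_of_mem_nhdsWithin hmemIic)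
    have heqOn := ODE_solution_unique_of_mem_Icc_left (fun t _ => hLip t)
      (hUc.mono hIccsub) hf' (fun _ _ => mem_univ _)
      (hgc.mono huIcc.symm.subset) hg' (fun _ _ => mem_univ _)
      (by rw [hU0 r hr, hg0])
    have heq := heqOn (left_mem_Icc.mpr hrs)
    simp only [hgdef, hDmdef, hedef, hFdef] at heq
    exact heq
end

section
/- Let ε > 0, let I ⊆ ℝ be an interval, and let h : I → (0,∞) be differentiable. Define A₂(s) = [[0, 1], [h(s), 0]] and S₂(s) = (1/√2) · [[h(s)^{−1/4}, −h(s)^{−1/4}], [h(s)^{1/4}, h(s)^{1/4}]]. If ξ₂ : I → ℝ² is differentiable and satisfies ε ξ₂'(s) = A₂(s) ξ₂(s) on I, then ξ₃(s) := S₂(s)⁻¹ ξ₂(s) is differentiable and satisfies ε ξ₃'(s) = A₃(s) ξ₃(s) on I, where A₃(s) = [[h(s)^{1/2}, −(ε/4) h'(s)/h(s)], [−(ε/4) h'(s)/h(s), −h(s)^{1/2}]]. -/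
open Matrix Set

private lemma quarter_pow (x : ℝ) (hx : 0 < x) (c : ℝ) (n : ℤ) (hc : c = n / 4) :
    x ^ c = (x ^ ((1/4 : ℝ))) ^ n := by
  rw [← Real.rpow_intCast (x ^ ((1/4:ℝ))), ← Real.rpow_mul hx.le, hc]
  ring_nf

/-- The similarity transformation `ξ₃ = S₂(s)⁻¹ ξ₂` turns the system
`ε ξ₂' = A₂(s) ξ₂` (with `A₂ = [[0,1],[h,0]]`, `h > 0`) into `ε ξ₃' = A₃(s) ξ₃` with
`A₃ = [[√h, -(ε/4)h'/h], [-(ε/4)h'/h, -√h]]`. -/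
theorem transformation_to_symmetric_form (ε : ℝ) (hε : 0 < ε)
    (I : Set ℝ) (hI : I.OrdConnected)
    (h h' : ℝ → ℝ)
    (hpos : ∀ s ∈ I, 0 < h s)
    (hderiv : ∀ s ∈ I, HasDerivWithinAt h (h' s) I s)
    (A₂ S₂ A₃ : ℝ → Matrix (Fin 2) (Fin 2) ℝ)
    (hA₂ : ∀ s, A₂ s = !![0, 1; h s, 0])
    (hS₂ : ∀ s, S₂ s = (Real.sqrt 2)⁻¹ •
      !![h s ^ (-(1/4) : ℝ), -(h s ^ (-(1/4) : ℝ)); h s ^ ((1/4) : ℝ), h s ^ ((1/4) : ℝ)])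
    (hA₃ : ∀ s, A₃ s = !![h s ^ ((1/2) : ℝ), -(ε/4) * (h' s / h s);
                          -(ε/4) * (h' s / h s), -(h s ^ ((1/2) : ℝ))])
    (ξ₂ ξ₂' : ℝ → Fin 2 → ℝ)
    (hξ₂ : ∀ s ∈ I, HasDerivWithinAt ξ₂ (ξ₂' s) I s)
    (hξ₂eq : ∀ s ∈ I, ε • ξ₂' s = (A₂ s).mulVec (ξ₂ s)) :
    ∀ s ∈ I, ∃ d : Fin 2 → ℝ,
      HasDerivWithinAt (fun s => (S₂ s)⁻¹.mulVec (ξ₂ s)) d I s ∧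
      ε • d = (A₃ s).mulVec ((S₂ s)⁻¹.mulVec (ξ₂ s)) := by
  -- inverse of S₂
  have hinv : ∀ t ∈ I, (S₂ t)⁻¹ = (Real.sqrt 2)⁻¹ •
      !![h t ^ ((1/4):ℝ), h t ^ (-(1/4):ℝ); -(h t ^ ((1/4):ℝ)), h t ^ (-(1/4):ℝ)] := by
    intro t ht
    have htpos := hpos t ht
    apply Matrix.inv_eq_right_inv
    have h1 : h t ^ (-(1/4):ℝ) * h t ^ ((1/4):ℝ) = 1 := by
      rw [← Real.rpow_add htpos]; norm_num
    have h2 : h t ^ ((1/4):ℝ) * h t ^ (-(1/4):ℝ) = 1 := by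
      rw [← Real.rpow_add htpos]; norm_num
    have hsq : (Real.sqrt 2)⁻¹ * (Real.sqrt 2)⁻¹ = 2⁻¹ := by
      rw [← mul_inv, Real.mul_self_sqrt (by norm_num : (0:ℝ) ≤ 2)]
    rw [hS₂, Matrix.smul_mul, Matrix.mul_smul, smul_smul, hsq, Matrix.mul_fin_two]
    ext i j
    fin_cases i <;> fin_cases j <;>
      simp [h1, h2] <;> ring_nf <;> nlinarith [h1, h2]
  intro s hs
  have hpos' := hpos s hs
  have hne : h s ≠ 0 := hpos'.ne'
  -- componentwise derivatives of ξ₂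
  have hξ₂c : ∀ i, HasDerivWithinAt (fun t => ξ₂ t i) (ξ₂' s i) I s :=
    fun i => hasDerivWithinAt_pi.1 (hξ₂ s hs) i
  have hq : HasDerivWithinAt (fun t => h t ^ ((1/4):ℝ))
      (h' s * (1/4) * h s ^ ((1/4:ℝ) - 1)) I s :=
    (hderiv s hs).rpow_const (Or.inl hne)
  have hqn : HasDerivWithinAt (fun t => h t ^ (-(1/4):ℝ))
      (h' s * (-(1/4)) * h s ^ ((-(1/4):ℝ) - 1)) I s :=
    (hderiv s hs).rpow_const (Or.inl hne)
  -- explicit transformed function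
  set c : ℝ := (Real.sqrt 2)⁻¹ with hc
  set g : ℝ → Fin 2 → ℝ := fun t =>
    ![c * (h t ^ ((1/4):ℝ) * ξ₂ t 0 + h t ^ (-(1/4):ℝ) * ξ₂ t 1),
      c * (-(h t ^ ((1/4):ℝ)) * ξ₂ t 0 + h t ^ (-(1/4):ℝ) * ξ₂ t 1)] with hg
  have hgeq : ∀ t ∈ I, g t = (S₂ t)⁻¹.mulVec (ξ₂ t) := by
    intro t ht
    rw [hinv t ht]
    funext i
    fin_cases i <;>
      simp [hg, Matrix.mulVec, dotProduct, Fin.sum_univ_two, mul_add, mul_assoc]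
  set d : Fin 2 → ℝ :=
    ![c * ((h' s * (1/4) * h s ^ ((1/4:ℝ) - 1)) * ξ₂ s 0 + h s ^ ((1/4):ℝ) * ξ₂' s 0
        + ((h' s * (-(1/4)) * h s ^ ((-(1/4):ℝ) - 1)) * ξ₂ s 1 + h s ^ (-(1/4):ℝ) * ξ₂' s 1)),
     c * (-((h' s * (1/4) * h s ^ ((1/4:ℝ) - 1)) * ξ₂ s 0 + h s ^ ((1/4):ℝ) * ξ₂' s 0)
        + ((h' s * (-(1/4)) * h s ^ ((-(1/4):ℝ) - 1)) * ξ₂ s 1 + h s ^ (-(1/4):ℝ) * ξ₂' s 1))] with hd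
  have hgd : HasDerivWithinAt g d I s := by
    rw [hasDerivWithinAt_pi]
    intro i
    fin_cases i
    · simpa [hg, hd] using (((hq.mul (hξ₂c 0)).add (hqn.mul (hξ₂c 1))).const_mul c)
    · simpa [hg, hd] using ((((hq.mul (hξ₂c 0)).neg).add (hqn.mul (hξ₂c 1))).const_mul c)
  refine ⟨d, hgd.congr (fun t ht => (hgeq t ht).symm) (hgeq s hs).symm, ?_⟩
  rw [← hgeq s hs, hA₃]
  -- scalar system equations
  have he0 : ε * ξ₂' s 0 = ξ₂ s 1 := by
    have := congrFun (hξ₂eq s hs) 0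
    simpa [hA₂, Matrix.mulVec, dotProduct, Fin.sum_univ_two] using this
  have he1 : ε * ξ₂' s 1 = h s * ξ₂ s 0 := by
    have := congrFun (hξ₂eq s hs) 1
    simpa [hA₂, Matrix.mulVec, dotProduct, Fin.sum_univ_two] using this
  have hεne : ε ≠ 0 := hε.ne'
  have k0 : ξ₂' s 0 = ε⁻¹ * ξ₂ s 1 := by
    field_simp; linarith [he0]
  have k1 : ξ₂' s 1 = ε⁻¹ * (h s * ξ₂ s 0) := by
    field_simp; linarith [he1]
  -- rewrite all rpow's as powers of a := h s ^ (1/4)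
  set a : ℝ := h s ^ ((1/4):ℝ) with haa
  have hapos : 0 < a := Real.rpow_pos_of_pos hpos' _
  have hane : a ≠ 0 := hapos.ne'
  have e1 : h s ^ (-(1/4):ℝ) = a⁻¹ := by
    rw [Real.rpow_neg hpos'.le, haa]
  have e2 : h s ^ ((1/2):ℝ) = a ^ 2 := by
    rw [haa, ← Real.rpow_natCast (h s ^ ((1/4):ℝ)) 2, ← Real.rpow_mul hpos'.le]; norm_num
  have e3 : h s ^ ((1/4:ℝ) - 1) = (a ^ 3)⁻¹ := by
    rw [haa, ← Real.rpow_natCast (h s ^ ((1/4):ℝ)) 3, ← Real.rpow_mul hpos'.le,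
      ← Real.rpow_neg hpos'.le]
    norm_num
  have e4 : h s ^ ((-(1/4):ℝ) - 1) = (a ^ 5)⁻¹ := by
    rw [haa, ← Real.rpow_natCast (h s ^ ((1/4):ℝ)) 5, ← Real.rpow_mul hpos'.le,
      ← Real.rpow_neg hpos'.le]
    norm_num
  have e5 : h s = a ^ 4 := by
    rw [haa, ← Real.rpow_natCast (h s ^ ((1/4):ℝ)) 4, ← Real.rpow_mul hpos'.le]
    norm_num
  funext i
  fin_cases i <;>
  · simp only [hd, hg, Matrix.mulVec, dotProduct, Fin.sum_univ_two, Pi.smul_apply,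
      smul_eq_mul, Matrix.cons_val_zero, Matrix.cons_val_one, Matrix.head_cons,
      Matrix.of_apply, Matrix.cons_val', Matrix.empty_val', Matrix.cons_val_fin_one,
      Fin.isValue, Fin.mk_one, Fin.mk_zero]
    rw [k0, k1]
    simp only [← haa, e1, e2, e3, e4]
    simp only [e5]
    field_simp
    ring
end

section
/- Let μ > 0 and let (u₁, u₂) : I → ℝ² be differentiable on an interval I ⊆ ℝ and satisfy the variational equations μ u₁'(z̄) = 4 z̄ u₁(z̄) + 2 u₂(z̄) − 2 u₁(z̄)², μ u₂'(z̄) = −2(1+μ) u₁(z̄). Define K(z̄) = [1 + (2/(1+μ))(u₂(z̄) − u₁(z̄)²)] · exp(−2 u₂(z̄)/(1+μ)). Then K is differentiable on I and μ K'(z̄) = −(16 z̄/(1+μ)) u₁(z̄)² exp(−2 u₂(z̄)/(1+μ)) for all z̄ ∈ I. In particular, if 0 ∈ I then K'(0) = 0, so K is a first integral of the system at z̄ = 0. -/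
open Set

/-- Along solutions of the variational equations
`μ u₁' = 4z̄ u₁ + 2u₂ - 2u₁²`, `μ u₂' = -2(1+μ) u₁`, the quantity
`K = [1 + (2/(1+μ))(u₂ - u₁²)] e^{-2u₂/(1+μ)}` satisfies
`μ K' = -(16 z̄/(1+μ)) u₁² e^{-2u₂/(1+μ)}`; in particular `K'(0) = 0`. -/
theorem first_integral_K_derivative (μ : ℝ) (hμ : 0 < μ)
    (I : Set ℝ) (hI : I.OrdConnected)
    (u₁ u₂ u₁' u₂' : ℝ → ℝ)
    (hu₁ : ∀ z ∈ I, HasDerivWithinAt u₁ (u₁' z) I z)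
    (hu₂ : ∀ z ∈ I, HasDerivWithinAt u₂ (u₂' z) I z)
    (heq₁ : ∀ z ∈ I, μ * u₁' z = 4 * z * u₁ z + 2 * u₂ z - 2 * (u₁ z) ^ 2)
    (heq₂ : ∀ z ∈ I, μ * u₂' z = -(2 * (1 + μ)) * u₁ z)
    (K : ℝ → ℝ)
    (hK : ∀ z, K z = (1 + (2 / (1 + μ)) * (u₂ z - (u₁ z) ^ 2)) *
      Real.exp (-(2 * u₂ z) / (1 + μ))) :
    (∀ z ∈ I, ∃ d : ℝ, HasDerivWithinAt K d I z ∧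
        μ * d = -(16 * z / (1 + μ)) * (u₁ z) ^ 2 * Real.exp (-(2 * u₂ z) / (1 + μ))) ∧
    (0 ∈ I → HasDerivWithinAt K 0 I 0) := by
  have ha : (1 : ℝ) + μ ≠ 0 := by positivity
  have hμ' : μ ≠ 0 := ne_of_gt hμ
  have key : ∀ z ∈ I, HasDerivWithinAt K
      ((2 / (1 + μ) * (u₂' z - 2 * u₁ z * u₁' z)) * Real.exp (-(2 * u₂ z) / (1 + μ))
        + (1 + (2 / (1 + μ)) * (u₂ z - (u₁ z) ^ 2)) *
          (Real.exp (-(2 * u₂ z) / (1 + μ)) * (-(2 * u₂' z) / (1 + μ)))) I z := by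
    intro z hz
    have h1 := hu₁ z hz
    have h2 := hu₂ z hz
    have hexp : HasDerivWithinAt (fun z => Real.exp (-(2 * u₂ z) / (1 + μ)))
        (Real.exp (-(2 * u₂ z) / (1 + μ)) * (-(2 * u₂' z) / (1 + μ))) I z := by
      have h := (((h2.const_mul (2:ℝ)).neg).div_const (1 + μ)).exp
      convert h using 1
      all_goals rfl
    have hpoly : HasDerivWithinAt (fun z => 1 + (2 / (1 + μ)) * (u₂ z - (u₁ z) ^ 2))
        (2 / (1 + μ) * (u₂' z - 2 * u₁ z * u₁' z)) I z := by
      have h := ((h2.sub (h1.pow 2)).const_mul (2 / (1 + μ))).const_add 1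
      convert h using 1
      · rfl
      · rfl
      · rfl
      · norm_num
    have hKeq : K = fun z => (1 + (2 / (1 + μ)) * (u₂ z - (u₁ z) ^ 2)) *
        Real.exp (-(2 * u₂ z) / (1 + μ)) := funext hK
    rw [hKeq]
    exact hpoly.mul hexp
  have val : ∀ z ∈ I,
      μ * ((2 / (1 + μ) * (u₂' z - 2 * u₁ z * u₁' z)) * Real.exp (-(2 * u₂ z) / (1 + μ))
        + (1 + (2 / (1 + μ)) * (u₂ z - (u₁ z) ^ 2)) *
          (Real.exp (-(2 * u₂ z) / (1 + μ)) * (-(2 * u₂' z) / (1 + μ))))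
      = -(16 * z / (1 + μ)) * (u₁ z) ^ 2 * Real.exp (-(2 * u₂ z) / (1 + μ)) := by
    intro z hz
    have e1 := heq₁ z hz
    have e2 := heq₂ z hz
    have h1 : u₁' z = (4 * z * u₁ z + 2 * u₂ z - 2 * (u₁ z) ^ 2) / μ := by
      field_simp; linarith
    have h2 : u₂' z = -(2 * (1 + μ)) * u₁ z / μ := by
      field_simp; linarith
    rw [h1, h2]
    field_simp
    ring
  constructor
  · intro z hz
    exact ⟨_, key z hz, val z hz⟩
  · intro h0
    have h := key 0 h0
    have hv := val 0 h0
    have : (2 / (1 + μ) * (u₂' 0 - 2 * u₁ 0 * u₁' 0)) * Real.exp (-(2 * u₂ 0) / (1 + μ))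
        + (1 + (2 / (1 + μ)) * (u₂ 0 - (u₁ 0) ^ 2)) *
          (Real.exp (-(2 * u₂ 0) / (1 + μ)) * (-(2 * u₂' 0) / (1 + μ))) = 0 := by
      have : -(16 * (0:ℝ) / (1 + μ)) * (u₁ 0) ^ 2 * Real.exp (-(2 * u₂ 0) / (1 + μ)) = 0 := by
        ring
      rw [this] at hv
      exact (mul_eq_zero.mp hv).resolve_left hμ'
    rwa [this] at h
end

section
/- Let μ > 0 and 0 ≤ z̄₀ < z̄₁. Suppose (x̄, η) : [z̄₀, z̄₁] → ℝ² is differentiable and satisfies the rectified folded-node system μ x̄'(z̄) = 2 η(z̄) − (1+μ), μ η'(z̄) = −4 x̄(z̄) η(z̄) − 2 z̄ on [z̄₀, z̄₁], with initial condition x̄(z̄₀) < 0 and η(z̄₀) < 0. Then x̄(z̄) < 0 and η(z̄) < 0 for all z̄ ∈ [z̄₀, z̄₁]; that is, the domain {x̄ < 0, η < 0} is positively invariant for z̄ ≥ 0. -/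
open Set Filter Topology

/-- For the rectified folded-node system `μ x̄' = 2η - (1+μ)`,
`μ η' = -4x̄η - 2z̄` with `z̄ ≥ 0`, the quadrant `{x̄ < 0, η < 0}` is positively
invariant. -/
theorem negative_quadrant_positively_invariant (μ : ℝ) (hμ : 0 < μ)
    (z₀ z₁ : ℝ) (hz₀ : 0 ≤ z₀) (hz : z₀ < z₁)
    (x η x' η' : ℝ → ℝ)
    (hx : ∀ z ∈ Set.Icc z₀ z₁, HasDerivWithinAt x (x' z) (Set.Icc z₀ z₁) z)
    (hη : ∀ z ∈ Set.Icc z₀ z₁, HasDerivWithinAt η (η' z) (Set.Icc z₀ z₁) z)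
    (heq₁ : ∀ z ∈ Set.Icc z₀ z₁, μ * x' z = 2 * η z - (1 + μ))
    (heq₂ : ∀ z ∈ Set.Icc z₀ z₁, μ * η' z = -(4 * x z * η z) - 2 * z)
    (hx0 : x z₀ < 0) (hη0 : η z₀ < 0) :
    ∀ z ∈ Set.Icc z₀ z₁, x z < 0 ∧ η z < 0 := by
  have hηc : ContinuousOn η (Icc z₀ z₁) := fun z hz => (hη z hz).continuousWithinAt
  -- First: η < 0 on Icc z₀ z₁.
  have hηneg : ∀ z ∈ Icc z₀ z₁, η z < 0 := by
    by_contra h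
    push_neg at h
    obtain ⟨w, hw, hw0⟩ := h
    set T : Set ℝ := Icc z₀ z₁ ∩ η ⁻¹' Ici 0 with hT
    have hTne : T.Nonempty := ⟨w, hw, hw0⟩
    have hTclosed : IsClosed T :=
      hηc.preimage_isClosed_of_isClosed isClosed_Icc isClosed_Ici
    have hTbdd : BddBelow T := ⟨z₀, fun t ht => ht.1.1⟩
    set s := sInf T with hs
    have hsT : s ∈ T := hTclosed.csInf_mem hTne hTbdd
    have hsIcc : s ∈ Icc z₀ z₁ := hsT.1
    have hsne : z₀ < s := by
      rcases lt_or_eq_of_le hsIcc.1 with h' | h'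
      · exact h'
      · exact absurd hsT.2 (by simp [← h', not_le.2 hη0])
    -- η s = 0
    have hηs0 : η s = 0 := by
      refine le_antisymm ?_ hsT.2
      -- limit from the left of negative values
      have hcont : ContinuousWithinAt η (Icc z₀ z₁) s := hηc s hsIcc
      have hle : Tendsto η (𝓝[Ioo z₀ s] s) (𝓝 (η s)) := by
        apply hcont.tendsto.mono_left
        exact nhdsWithin_mono s (fun t ht => ⟨le_of_lt ht.1, le_trans (le_of_lt ht.2) hsIcc.2⟩)
      have : ∀ᶠ t in 𝓝[Ioo z₀ s] s, η t ≤ 0 := by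
        filter_upwards [self_mem_nhdsWithin] with t ht
        by_contra hc
        push_neg at hc
        have : s ≤ t := csInf_le hTbdd ⟨⟨le_of_lt ht.1, le_trans (le_of_lt ht.2) hsIcc.2⟩, le_of_lt hc⟩
        exact absurd ht.2 (not_lt.2 this)
      haveI hNB : (𝓝[Ioo z₀ s] s).NeBot := right_nhdsWithin_Ioo_neBot hsne
      exact le_of_tendsto hle this
    -- η' s < 0
    have hη's : η' s < 0 := by
      have h2 := heq₂ s hsIcc
      rw [hηs0] at h2
      have : μ * η' s = -2 * s := by linarith
      nlinarith [lt_of_le_of_lt hz₀ hsne]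
    -- slope argument: for t slightly left of s, η t > 0
    have hslope := (hasDerivWithinAt_iff_tendsto_slope.1 (hη s hsIcc))
    have hslope' : Tendsto (slope η s) (𝓝[Ioo z₀ s] s) (𝓝 (η' s)) := by
      apply hslope.mono_left
      apply nhdsWithin_mono
      intro t ht
      exact ⟨⟨le_of_lt ht.1, le_trans (le_of_lt ht.2) hsIcc.2⟩, ne_of_lt ht.2⟩
    haveI : (𝓝[Ioo z₀ s] s).NeBot := right_nhdsWithin_Ioo_neBot hsne
    have hev : ∀ᶠ t in 𝓝[Ioo z₀ s] s, slope η s t < 0 :=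
      hslope'.eventually (eventually_lt_nhds hη's)
    obtain ⟨t, hsl, htsl⟩ := (hev.and eventually_mem_nhdsWithin).exists
    -- slope η s t = (η t - η s) / (t - s) < 0 with t < s ⇒ η t > 0
    have hts : t - s < 0 := sub_neg.2 htsl.2
    rw [slope_def_field] at hsl
    have hnum : η t - η s > 0 := by
      rcases div_neg_iff.1 hsl with ⟨h1, _⟩ | ⟨_, h2⟩
      · exact h1
      · linarith
    have hηt : 0 < η t := by rw [hηs0] at hnum; linarith
    have : s ≤ t := csInf_le hTbdd ⟨⟨le_of_lt htsl.1, le_trans (le_of_lt htsl.2) hsIcc.2⟩, le_of_lt hηt⟩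
    exact absurd htsl.2 (not_lt.2 this)
  -- Now x: x' < 0 so x is strictly decreasing on Icc, hence x z ≤ x z₀ < 0.
  intro z hzm
  refine ⟨?_, hηneg z hzm⟩
  have hx'neg : ∀ t ∈ Icc z₀ z₁, x' t < 0 := by
    intro t ht
    have h1 := heq₁ t ht
    have := hηneg t ht
    nlinarith
  have hanti : StrictAntiOn x (Icc z₀ z₁) := by
    apply strictAntiOn_of_deriv_neg (convex_Icc z₀ z₁)
      (fun t ht => (hx t ht).continuousWithinAt)
    intro t ht
    rw [interior_Icc] at ht
    have hmem : t ∈ Icc z₀ z₁ := Ioo_subset_Icc_self ht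
    have : HasDerivAt x (x' t) t := (hx t hmem).hasDerivAt (Icc_mem_nhds ht.1 ht.2)
    rw [this.deriv]
    exact hx'neg t hmem
  rcases eq_or_lt_of_le hzm.1 with h | h
  · rw [← h]; exact hx0
  · exact lt_trans (hanti (left_mem_Icc.2 (le_of_lt hz)) hzm h) hx0
end

section
/- Let f : ℝ → (−1, ∞) be the function determined by log(1 + f(t)) = f(t) − 2t² and sign f(t) = sign t. Then: (i) for every t ≤ 0 one has e^{−1−2t²} − 1 ≤ f(t) ≤ 0; and (ii) there exist constants δ > 0 and C > 0 such that |f(t) − 2t| ≤ C t² for all t with |t| ≤ δ. -/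
set_option maxHeartbeats 1000000

private lemma key_est (x t : ℝ) (hx : 0 < x) (hx12 : x ≤ 1/12) (ht : 0 < t)
    (hr : |x^2 - 4*t^2| ≤ 4*x^3) : |x - 2*t| ≤ 24*t^2 := by
  obtain ⟨hr1, hr2⟩ := abs_le.mp hr
  -- x^2 ≤ 4 t^2 + 4 x^3 and 4 t^2 ≤ x^2 + 4 x^3
  have hx3 : x^3 ≤ x^2 / 12 := by nlinarith [sq_nonneg x]
  have h3 : x ≤ 3*t := by nlinarith [sq_nonneg (x - 3*t), sq_nonneg (x + 3*t)]
  have h4 : t ≤ x := by nlinarith [sq_nonneg (x - t), sq_nonneg (x + t)]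
  rw [abs_le]
  constructor
  · nlinarith [mul_pos ht ht, mul_pos ht (mul_pos ht ht)]
  · nlinarith [mul_pos ht ht, mul_pos ht (mul_pos ht ht)]

/-- Properties of the function `f` defined by `log(1+f(t)) = f(t) - 2t²`
with `sign f(t) = sign t`: (i) `e^{-1-2t²} - 1 ≤ f(t) ≤ 0` for `t ≤ 0`;
(ii) `f(t) = 2t + O(t²)` near `t = 0`. -/
theorem properties_of_f (f : ℝ → ℝ)
    (hf : ∀ t : ℝ, -1 < f t ∧ Real.log (1 + f t) = f t - 2 * t ^ 2 ∧
        (0 < t → 0 < f t) ∧ (t = 0 → f t = 0) ∧ (t < 0 → f t < 0)) :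
    (∀ t : ℝ, t ≤ 0 → Real.exp (-1 - 2 * t ^ 2) - 1 ≤ f t ∧ f t ≤ 0) ∧
    ∃ δ : ℝ, 0 < δ ∧ ∃ C : ℝ, 0 < C ∧
      ∀ t : ℝ, |t| ≤ δ → |f t - 2 * t| ≤ C * t ^ 2 := by
  constructor
  · intro t ht
    obtain ⟨h1, h2, h3, h4, h5⟩ := hf t
    have hpos : (0:ℝ) < 1 + f t := by linarith
    have hle : f t ≤ 0 := by
      rcases lt_or_eq_of_le ht with h | h
      · exact (h5 h).le
      · rw [h4 h]
    refine ⟨?_, hle⟩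
    have hexp : Real.exp (f t - 2 * t ^ 2) = 1 + f t := by
      rw [← h2]; exact Real.exp_log hpos
    have hmono : Real.exp (-1 - 2 * t ^ 2) ≤ Real.exp (f t - 2 * t ^ 2) :=
      Real.exp_le_exp.mpr (by linarith)
    rw [hexp] at hmono
    linarith
  · refine ⟨1/100, by norm_num, 24, by norm_num, ?_⟩
    intro t ht
    obtain ⟨h1, h2, h3, h4, h5⟩ := hf t
    rcases eq_or_ne t 0 with rfl | ht0
    · simp [h4 rfl]
    obtain ⟨x, hx⟩ : ∃ x, f t = x := ⟨f t, rfl⟩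
    rw [hx] at h1 h2 h3 h4 h5 ⊢
    have hg : x - Real.log (1 + x) = 2 * t ^ 2 := by linarith
    have ht2 : t ^ 2 ≤ 1/10000 := by
      have : |t| ^ 2 ≤ (1/100 : ℝ) ^ 2 := by
        apply pow_le_pow_left₀ (abs_nonneg t) ht
      rw [sq_abs] at this; linarith
    -- Claim A : |x| ≤ 1/12
    have habs : |x| ≤ 1/12 := by
      have h1x : (0:ℝ) < 1 + x := by linarith
      set u := Real.sqrt (Real.sqrt (1 + x)) with hu
      have hu0 : 0 ≤ u := Real.sqrt_nonneg _
      have hu4 : u ^ 4 = 1 + x := by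
        have ha : u ^ 2 = Real.sqrt (1 + x) := Real.sq_sqrt (Real.sqrt_nonneg _)
        have hb : (u ^ 2) ^ 2 = 1 + x := by rw [ha]; exact Real.sq_sqrt h1x.le
        nlinarith [hb]
      have hupos : 0 < u := by
        rcases hu0.lt_or_eq with h | h
        · exact h
        · exfalso; rw [← h] at hu4; norm_num at hu4; linarith
      have hlog : Real.log (1 + x) = 4 * Real.log u := by
        rw [← hu4, Real.log_pow]; push_cast; ring
      have hlogu : Real.log u ≤ u - 1 := Real.log_le_sub_one_of_pos hupos
      have hkey : u ^ 4 - 4 * u + 3 ≤ 1/5000 := by nlinarith [hg, hlog, hlogu, hu4]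
      have hfac : (u - 1) ^ 2 * ((u + 1) ^ 2 + 2) ≤ 1/5000 := by nlinarith
      have hsq : (u - 1) ^ 2 ≤ 1/10000 := by nlinarith [sq_nonneg (u + 1), sq_nonneg (u - 1)]
      have hub : u ≤ 101/100 := by nlinarith
      have hlb : 99/100 ≤ u := by nlinarith
      rw [abs_le]
      constructor
      · nlinarith [hu4, sq_nonneg (u - 1), sq_nonneg (u + 1), sq_nonneg (u^2 - 1)]
      · nlinarith [hu4, sq_nonneg (u - 1), sq_nonneg (u + 1), sq_nonneg (u^2 - 1)]
    -- Taylor estimate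
    have hxlt : |(-x)| < 1 := by rw [abs_neg]; linarith [habs]
    have hser := Real.abs_log_sub_add_sum_range_le hxlt 2
    have hser' : |(-x + x^2/2) + Real.log (1 + x)| ≤ |x|^3 / (1 - |x|) := by
      have e1 : (∑ i ∈ Finset.range 2, (-x) ^ (i+1) / (i+1)) = -x + x^2/2 := by
        simp [Finset.sum_range_succ]; ring
      have e2 : (1:ℝ) - (-x) = 1 + x := by ring
      rw [e1, e2] at hser
      simpa [abs_neg] using hser
    have hrb : |Real.log (1 + x) - x + x^2/2| ≤ 2 * |x|^3 := by
      have e3 : Real.log (1 + x) - x + x^2/2 = (-x + x^2/2) + Real.log (1 + x) := by ring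
      rw [e3]
      refine hser'.trans ?_
      rw [div_le_iff₀ (by linarith [habs, abs_nonneg x])]
      have hfin : ∀ a : ℝ, 0 ≤ a → a ≤ 1/12 → a ^ 3 ≤ 2 * a ^ 3 * (1 - a) := by
        intro a h0 h
        nlinarith [pow_nonneg h0 3]
      exact hfin |x| (abs_nonneg x) habs
    have hxsq : |x^2 - 4*t^2| ≤ 4 * |x|^3 := by
      have e4 : x^2 - 4*t^2 = 2 * (Real.log (1 + x) - x + x^2/2) := by linarith [hg]
      rw [e4, abs_mul]
      simp only [abs_two]
      linarith [hrb]
    rcases lt_trichotomy t 0 with htneg | rfl | htpos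
    · -- t < 0, x < 0
      have hxneg : x < 0 := h5 htneg
      have habs' : -x ≤ 1/12 := by
        have := abs_le.mp habs; linarith [this.1]
      have hxsq' : |(-x)^2 - 4*(-t)^2| ≤ 4*(-x)^3 := by
        have : |x|^3 = (-x)^3 := by rw [abs_of_neg hxneg]
        calc |(-x)^2 - 4*(-t)^2| = |x^2 - 4*t^2| := by ring_nf
          _ ≤ 4 * |x|^3 := hxsq
          _ = 4 * (-x)^3 := by rw [this]
      have h := key_est (-x) (-t) (by linarith) habs' (by linarith) hxsq'
      have e5 : |x - 2*t| = |(-x) - 2*(-t)| := by rw [show (-x) - 2*(-t) = -(x - 2*t) by ring, abs_neg]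
      rw [show x - 2 * t = x - 2*t by ring, e5]
      calc |(-x) - 2*(-t)| ≤ 24*(-t)^2 := h
        _ = 24 * t^2 := by ring
    · exact absurd rfl ht0
    · -- t > 0, x > 0
      have hxpos : 0 < x := h3 htpos
      have habs' : x ≤ 1/12 := by linarith [(abs_le.mp habs).2]
      have hxsq' : |x^2 - 4*t^2| ≤ 4*x^3 := by
        rw [abs_of_pos hxpos] at hxsq; exact hxsq
      exact key_est x t hxpos habs' htpos hxsq'
end
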